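/- Let W and T be real n×n matrices with W symmetric positive definite and T symmetric positive semidefinite, and let β > 0. Then, with ‖·‖₂ the spectral (operator ℓ²) norm and κ(W) = ‖W‖₂·‖W^{-1}‖₂, one has ‖(W + βT)^{-1}(βW - T)‖₂ ≤ √κ(W) · max over the eigenvalues μ of S = W^{-1/2} T W^{-1/2} of |β - μ|/(1 + βμ). -/

import Mathlib

open Matrix

/-- The square root of a positive semidefinite matrix, as defined in Mathlib (Dec 2024),
where it has since been removed. -/
noncomputable def Matrix.PosSemidef.sqrt {m : Type*} [Fintype m] [DecidableEq m]
    {𝕜 : Type*} [RCLike 𝕜] [PartialOrder 𝕜] {A : Matrix m m 𝕜} (hA : A.PosSemidef) : Matrix m m 𝕜 :=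
  hA.1.eigenvectorUnitary.1 * diagonal ((↑) ∘ (√·) ∘ hA.1.eigenvalues) *
    (star hA.1.eigenvectorUnitary : Matrix m m 𝕜)

/-- The operator norm on `n × n` real matrices induced by the Euclidean (`ℓ²`) vector norm. -/
noncomputable def l2OpNorm {n : ℕ} (M : Matrix (Fin n) (Fin n) ℝ) : ℝ :=
  ‖(Matrix.toEuclideanCLM (𝕜 := ℝ) M : EuclideanSpace ℝ (Fin n) →L[ℝ] EuclideanSpace ℝ (Fin n))‖

open scoped Matrix.Norms.L2Operator

lemma psd_sqrt_posSemidef {n : ℕ} {A : Matrix (Fin n) (Fin n) ℝ} (hA : A.PosSemidef) :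
    hA.sqrt.PosSemidef := by
  unfold Matrix.PosSemidef.sqrt
  have hD : (diagonal (((↑) ∘ (√·) ∘ hA.1.eigenvalues) : Fin n → ℝ)).PosSemidef :=
    posSemidef_diagonal_iff.mpr (fun i => by simp [Real.sqrt_nonneg])
  exact
    hD.mul_mul_conjTranspose_same (hA.1.eigenvectorUnitary : Matrix (Fin n) (Fin n) ℝ)

lemma psd_sqrt_mul_self {n : ℕ} {A : Matrix (Fin n) (Fin n) ℝ} (hA : A.PosSemidef) :
    hA.sqrt * hA.sqrt = A := by
  have hU : star (hA.1.eigenvectorUnitary : Matrix (Fin n) (Fin n) ℝ) *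
      (hA.1.eigenvectorUnitary : Matrix (Fin n) (Fin n) ℝ) = 1 := Unitary.coe_star_mul_self _
  have hD : diagonal (((↑) ∘ (√·) ∘ hA.1.eigenvalues) : Fin n → ℝ) *
      diagonal (((↑) ∘ (√·) ∘ hA.1.eigenvalues) : Fin n → ℝ) =
      diagonal (RCLike.ofReal ∘ hA.1.eigenvalues) := by
    rw [diagonal_mul_diagonal]; congr 1; funext i
    simp [Real.mul_self_sqrt (hA.eigenvalues_nonneg i)]
  conv_rhs => rw [hA.1.spectral_theorem, Unitary.conjStarAlgAut_apply]
  unfold Matrix.PosSemidef.sqrt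
  rw [← hD]
  simp only [Matrix.mul_assoc]
  rw [← Matrix.mul_assoc (star _) _ (diagonal _ * _), hU, Matrix.one_mul]
  rfl

lemma l2OpNorm_eq_norm {n : ℕ} (M : Matrix (Fin n) (Fin n) ℝ) : l2OpNorm M = ‖M‖ := rfl

lemma l2_opNorm_diagonal_le {n : ℕ} [Nonempty (Fin n)] (v : Fin n → ℝ) :
    ‖Matrix.diagonal v‖ ≤ ⨆ i, |v i| := by
  have hbdd : BddAbove (Set.range fun i => |v i|) := Set.Finite.bddAbove (Set.finite_range _)
  have hc : ∀ i, |v i| ≤ ⨆ i, |v i| := fun i => le_ciSup hbdd i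
  have hc0 : 0 ≤ ⨆ i, |v i| := le_trans (abs_nonneg _) (hc (Classical.arbitrary _))
  rw [Matrix.cstar_norm_def]
  refine ContinuousLinearMap.opNorm_le_bound _ hc0 fun x => ?_
  set c := ⨆ i, |v i| with hcdef
  have hx : ∀ i, (Matrix.toEuclideanCLM (𝕜 := ℝ) (Matrix.diagonal v) x) i = v i * x i := by
    intro i
    have h2 := congrFun (Matrix.ofLp_toEuclideanCLM (𝕜 := ℝ) (Matrix.diagonal v) x) i
    simpa [Matrix.mulVec_diagonal] using h2
  rw [EuclideanSpace.norm_eq, EuclideanSpace.norm_eq]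
  rw [show c * Real.sqrt (∑ i, ‖x i‖ ^ 2) = Real.sqrt (c ^ 2 * ∑ i, ‖x i‖ ^ 2) by
    rw [Real.sqrt_mul (by positivity) _, Real.sqrt_sq hc0]]
  apply Real.sqrt_le_sqrt
  rw [Finset.mul_sum]
  apply Finset.sum_le_sum
  intro i _
  rw [hx i]
  calc ‖v i * x i‖ ^ 2 = |v i| ^ 2 * ‖x i‖ ^ 2 := by
        rw [norm_mul, mul_pow, Real.norm_eq_abs]
    _ ≤ c ^ 2 * ‖x i‖ ^ 2 := by
        have := hc i
        gcongr

set_option maxHeartbeats 1000000 in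
/-- **Lemma 2, estimate for `c_s(β)`.** For `W` symmetric positive definite, `T` symmetric
positive semidefinite and `β > 0`,
`‖(W + βT)⁻¹(βW - T)‖₂ ≤ √κ(W) · max_{μ ∈ σ(S)} |β - μ|/(1 + βμ)`,
where `S = W^{-1/2} T W^{-1/2}` and `κ(W) = ‖W‖₂·‖W⁻¹‖₂`. -/
theorem c_s_bound
    {n : ℕ} (hn : 0 < n)
    (W T : Matrix (Fin n) (Fin n) ℝ)
    (hW : W.PosDef) (hT : T.PosSemidef)
    (S : Matrix (Fin n) (Fin n) ℝ)
    (hSdef : S = (hW.posSemidef.sqrt)⁻¹ * T * (hW.posSemidef.sqrt)⁻¹)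
    (hS : S.IsHermitian)
    (β : ℝ) (hβ : 0 < β) :
    l2OpNorm ((W + β • T)⁻¹ * (β • W - T)) ≤
      Real.sqrt (l2OpNorm W * l2OpNorm W⁻¹) *
        (⨆ i, |β - hS.eigenvalues i| / (1 + β * hS.eigenvalues i)) := by
  haveI : Nonempty (Fin n) := ⟨⟨0, hn⟩⟩
  set R := hW.posSemidef.sqrt with hRdef
  have hRps : R.PosSemidef := psd_sqrt_posSemidef hW.posSemidef
  have hRH : Rᴴ = R := hRps.1
  have hRR : R * R = W := psd_sqrt_mul_self hW.posSemidef
  have hWdet : IsUnit W.det := (Matrix.isUnit_iff_isUnit_det W).mp hW.isUnit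
  have hRdet : IsUnit R.det := by
    have h : R.det * R.det = W.det := by rw [← det_mul, hRR]
    exact isUnit_of_mul_isUnit_left (h ▸ hWdet)
  have h1 : R * R⁻¹ = 1 := mul_nonsing_inv R hRdet
  have h2 : R⁻¹ * R = 1 := nonsing_inv_mul R hRdet
  have hRiH : (R⁻¹)ᴴ = R⁻¹ := by rw [conjTranspose_nonsing_inv, hRH]
  have hSps : S.PosSemidef := by
    have := hT.conjTranspose_mul_mul_same (B := R⁻¹)
    rwa [hRiH, ← hSdef] at this
  set d : Fin n → ℝ := hS.eigenvalues with hddef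
  have hd0 : ∀ i, 0 ≤ d i := fun i => hSps.eigenvalues_nonneg i
  have hg : ∀ i, 0 < 1 + β * d i := fun i =>
    add_pos_of_pos_of_nonneg one_pos (mul_nonneg hβ.le (hd0 i))
  -- factorizations through R
  have hT' : R * S * R = T := by
    rw [hSdef]
    calc R * (R⁻¹ * T * R⁻¹) * R = (R * R⁻¹) * T * (R⁻¹ * R) := by
          simp only [Matrix.mul_assoc]
      _ = T := by rw [h1, h2, one_mul, mul_one]
  have hWfac : R * (1 + β • S) * R = W + β • T := by
    rw [mul_add, mul_one, Matrix.mul_smul, add_mul, Matrix.smul_mul, hRR, hT']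
  have hBfac : R * (β • 1 - S) * R = β • W - T := by
    rw [mul_sub, Matrix.mul_smul, mul_one, sub_mul, Matrix.smul_mul, hRR, hT']
  -- spectral decomposition of S
  set V : Matrix (Fin n) (Fin n) ℝ := (hS.eigenvectorUnitary : Matrix (Fin n) (Fin n) ℝ) with hVdef
  have hV1 : V * Vᴴ = 1 := by
    have := hS.eigenvectorUnitary.2
    rw [Matrix.mem_unitaryGroup_iff] at this
    simpa [Matrix.star_eq_conjTranspose] using this
  have hV2 : Vᴴ * V = 1 := by
    have := hS.eigenvectorUnitary.2
    rw [Matrix.mem_unitaryGroup_iff'] at this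
    simpa [Matrix.star_eq_conjTranspose] using this
  have hdiag : S = V * diagonal d * Vᴴ := by
    simpa [Matrix.star_eq_conjTranspose, Function.comp] using hS.spectral_theorem
  have hVinv : V⁻¹ = Vᴴ := inv_eq_left_inv hV2
  have hVHinv : (Vᴴ)⁻¹ = V := inv_eq_left_inv hV1
  have hVcancel : ∀ X : Matrix (Fin n) (Fin n) ℝ, Vᴴ * (V * X) = X := fun X => by
    rw [← mul_assoc, hV2, one_mul]
  set g : Fin n → ℝ := fun i => 1 + β * d i with hgdef
  have hGfac : V * diagonal g * Vᴴ = 1 + β • S := by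
    have hdg : diagonal g = 1 + β • diagonal d := by
      ext i j
      by_cases h : i = j <;> simp [diagonal, h, hgdef]
    rw [hdg, mul_add, mul_one, Matrix.mul_smul, add_mul, Matrix.smul_mul, hV1, ← hdiag]
  have hBfac2 : V * diagonal (fun i => β - d i) * Vᴴ = β • 1 - S := by
    have hdg : diagonal (fun i => β - d i) = β • 1 - diagonal d := by
      ext i j
      by_cases h : i = j <;> simp [diagonal, h, Matrix.one_apply]
    rw [hdg, mul_sub, Matrix.mul_smul, mul_one, sub_mul, Matrix.smul_mul, hV1, ← hdiag]
  have hdiaginv : (diagonal g)⁻¹ = diagonal (fun i => (g i)⁻¹) := by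
    refine inv_eq_right_inv ?_
    rw [diagonal_mul_diagonal]
    have h : (fun i => g i * (g i)⁻¹) = (fun _ => (1 : ℝ)) := by
      funext i; exact mul_inv_cancel₀ (hg i).ne'
    rw [h, diagonal_one]
  have hSinv : (1 + β • S)⁻¹ = V * diagonal (fun i => (g i)⁻¹) * Vᴴ := by
    rw [← hGfac, Matrix.mul_inv_rev, Matrix.mul_inv_rev, hVinv, hVHinv, hdiaginv, mul_assoc]
  set f : Fin n → ℝ := fun i => (β - d i) / (1 + β * d i) with hfdef
  have hMfac : (1 + β • S)⁻¹ * (β • 1 - S) = V * diagonal f * Vᴴ := by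
    rw [hSinv, ← hBfac2]
    have : diagonal (fun i => (g i)⁻¹) * diagonal (fun i => β - d i) = diagonal f := by
      rw [diagonal_mul_diagonal]
      have h : (fun i => (g i)⁻¹ * (β - d i)) = f := by
        funext i; rw [hfdef]; exact inv_mul_eq_div _ _
      rw [h]
    calc V * diagonal (fun i => (g i)⁻¹) * Vᴴ * (V * diagonal (fun i => β - d i) * Vᴴ)
        = V * (diagonal (fun i => (g i)⁻¹) * diagonal (fun i => β - d i)) * Vᴴ := by
          simp only [Matrix.mul_assoc]
          rw [hVcancel]
      _ = V * diagonal f * Vᴴ := by rw [this]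
  -- norms
  haveI : Nontrivial (Matrix (Fin n) (Fin n) ℝ) := inferInstance
  have hone : ‖(1 : Matrix (Fin n) (Fin n) ℝ)‖ = 1 := norm_one
  have normV : ‖V‖ = 1 := by
    have h := l2_opNorm_conjTranspose_mul_self V
    rw [hV2, hone] at h
    calc ‖V‖ = Real.sqrt (‖V‖ * ‖V‖) := (Real.sqrt_mul_self (norm_nonneg V)).symm
      _ = Real.sqrt 1 := by rw [← h]
      _ = 1 := Real.sqrt_one
  have normVH : ‖Vᴴ‖ = 1 := by rw [l2_opNorm_conjTranspose, normV]
  have normM : ‖(1 + β • S)⁻¹ * (β • 1 - S)‖ ≤ ⨆ i, |β - d i| / (1 + β * d i) := by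
    rw [hMfac]
    calc ‖V * diagonal f * Vᴴ‖ ≤ ‖V‖ * ‖diagonal f‖ * ‖Vᴴ‖ :=
          (norm_mul_le _ _).trans
            (mul_le_mul_of_nonneg_right (norm_mul_le _ _) (norm_nonneg _))
      _ = ‖diagonal f‖ := by rw [normV, normVH, one_mul, mul_one]
      _ ≤ ⨆ i, |f i| := l2_opNorm_diagonal_le f
      _ = ⨆ i, |β - d i| / (1 + β * d i) := by
          congr 1
          ext i
          rw [hfdef, abs_div, abs_of_pos (hg i)]
  have hnR : ‖R‖ * ‖R‖ = ‖W‖ := by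
    rw [← l2_opNorm_conjTranspose_mul_self, hRH, hRR]
  have hWinv : R⁻¹ * R⁻¹ = W⁻¹ := by rw [← hRR, Matrix.mul_inv_rev]
  have hnRi : ‖R⁻¹‖ * ‖R⁻¹‖ = ‖W⁻¹‖ := by
    rw [← l2_opNorm_conjTranspose_mul_self, hRiH, hWinv]
  have hsqrt : Real.sqrt (‖W‖ * ‖W⁻¹‖) = ‖R⁻¹‖ * ‖R‖ := by
    rw [← hnR, ← hnRi, Real.sqrt_mul (mul_nonneg (norm_nonneg _) (norm_nonneg _)) _,
      Real.sqrt_mul_self (norm_nonneg _), Real.sqrt_mul_self (norm_nonneg _), mul_comm]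
  have hRcancel : ∀ X : Matrix (Fin n) (Fin n) ℝ, R⁻¹ * (R * X) = X := fun X => by
    rw [← mul_assoc, h2, one_mul]
  have hPfac : (W + β • T)⁻¹ * (β • W - T)
      = R⁻¹ * ((1 + β • S)⁻¹ * (β • 1 - S)) * R := by
    rw [← hWfac, ← hBfac, Matrix.mul_inv_rev, Matrix.mul_inv_rev]
    simp only [Matrix.mul_assoc]
    rw [hRcancel]
  simp only [l2OpNorm_eq_norm]
  rw [hPfac, hsqrt]
  calc ‖R⁻¹ * ((1 + β • S)⁻¹ * (β • 1 - S)) * R‖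
      ≤ ‖R⁻¹‖ * ‖(1 + β • S)⁻¹ * (β • 1 - S)‖ * ‖R‖ :=
        (norm_mul_le _ _).trans
          (mul_le_mul_of_nonneg_right (norm_mul_le _ _) (norm_nonneg _))
    _ ≤ ‖R⁻¹‖ * (⨆ i, |β - d i| / (1 + β * d i)) * ‖R‖ := by
        have := normM
        gcongr
    _ = ‖R⁻¹‖ * ‖R‖ * (⨆ i, |β - d i| / (1 + β * d i)) := by ring
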